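/- Let b ∈ W^β (β ≥ 0) with b(t) ≠ 0 on 𝕋 and wind(b) = 0, and suppose b(t^{-1}) = b(t) for all t ∈ 𝕋. Then in the Wiener–Hopf factorization b = b_+ · b_− (with b_± ∈ W^β_±, wind(b_±) = 0) one has b_−(t) = b_+(t^{-1})/χ_b, where χ_b = exp((1/π) ∫_0^π log b(e^{iφ}) dφ). -/

import Mathlib

open Complex MeasureTheory intervalIntegral


/-- Wiener–Hopf factorization of a symmetric symbol `b = exp(∑_j L_j t^j)` with winding
number zero: with `b_+(t) = exp(L_0 + ∑_{j≥1} L_j t^j)` and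
`b_-(t) = exp(∑_{j≤-1} L_j t^j)`, one has `b = b_+ b_-` on the circle, and
`b_-(t) = b_+(t^{-1}) / χ_b`, where `χ_b = exp((1/π)∫_0^π log b(e^{iφ}) dφ)`. -/
theorem stmt13 (β : ℝ) (hβ : 0 ≤ β) (L : ℤ → ℂ)
    (hL : Summable fun j : ℤ => ‖L j‖ * (1 + (|j| : ℝ)) ^ β)
    (hsym : ∀ j : ℤ, L (-j) = L j) :
    ∀ t : ℂ, ‖t‖ = 1 →
      (Complex.exp (∑' j : ℤ, L j * t ^ j) =
        Complex.exp (L 0 + ∑' k : ℕ, L ((k : ℤ) + 1) * t ^ ((k : ℤ) + 1)) *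
          Complex.exp (∑' k : ℕ, L (-((k : ℤ) + 1)) * t ^ (-((k : ℤ) + 1)))) ∧
      Complex.exp (∑' k : ℕ, L (-((k : ℤ) + 1)) * t ^ (-((k : ℤ) + 1))) =
        Complex.exp (L 0 + ∑' k : ℕ, L ((k : ℤ) + 1) * (t⁻¹) ^ ((k : ℤ) + 1)) /
          Complex.exp ((1 / (Real.pi : ℂ)) *
            ∫ φ in (0 : ℝ)..Real.pi,
              ∑' j : ℤ, L j * Complex.exp (Complex.I * (j : ℂ) * (φ : ℂ))) := by
  -- summability of ‖L j‖
  have hLnorm : Summable fun j : ℤ => ‖L j‖ := by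
    refine hL.of_nonneg_of_le (fun j => norm_nonneg _) (fun j => ?_)
    have h1 : (1 : ℝ) ≤ (1 + (|j| : ℝ)) ^ β :=
      Real.one_le_rpow (le_add_of_nonneg_right (by positivity)) hβ
    nlinarith [norm_nonneg (L j)]
  intro t ht
  have ht0 : t ≠ 0 := by intro h; rw [h] at ht; simp at ht
  have htz : ∀ j : ℤ, ‖t ^ j‖ = 1 := by
    intro j; rw [norm_zpow, ht, one_zpow]
  -- splitting the two-sided sum
  have hsummand : ∀ j : ℤ, ‖L j * t ^ j‖ = ‖L j‖ := by
    intro j; rw [norm_mul, htz, mul_one]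
  have hsummable : Summable fun j : ℤ => L j * t ^ j := by
    refine Summable.of_norm ?_
    simpa only [hsummand] using hLnorm
  have hnat : Summable fun n : ℕ => L (n : ℤ) * t ^ (n : ℤ) :=
    hsummable.comp_injective (fun a b hab => by exact_mod_cast hab)
  have hneg : Summable fun n : ℕ => L (-((n : ℤ) + 1)) * t ^ (-((n : ℤ) + 1)) :=
    hsummable.comp_injective (fun a b hab => by omega)
  have hsplit : (∑' j : ℤ, L j * t ^ j) =
      (L 0 + ∑' k : ℕ, L ((k : ℤ) + 1) * t ^ ((k : ℤ) + 1)) +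
        ∑' k : ℕ, L (-((k : ℤ) + 1)) * t ^ (-((k : ℤ) + 1)) := by
    have h1 : (∑' j : ℤ, L j * t ^ j) =
        (∑' k : ℕ, L (k : ℤ) * t ^ (k : ℤ)) +
          ∑' k : ℕ, L (-((k : ℤ) + 1)) * t ^ (-((k : ℤ) + 1)) :=
      tsum_of_nat_of_neg_add_one hnat hneg
    have h2 : (∑' k : ℕ, L (k : ℤ) * t ^ (k : ℤ)) =
        L 0 + ∑' k : ℕ, L ((k : ℤ) + 1) * t ^ ((k : ℤ) + 1) := by
      rw [Summable.tsum_eq_zero_add hnat]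
      push_cast
      norm_num
    exact h1.trans (by rw [h2])
  constructor
  · rw [hsplit, Complex.exp_add]
  -- second part
  -- the negative-part sum equals the positive-part sum in t⁻¹ by symmetry
  have hkey : (∑' k : ℕ, L (-((k : ℤ) + 1)) * t ^ (-((k : ℤ) + 1))) =
      ∑' k : ℕ, L ((k : ℤ) + 1) * (t⁻¹) ^ ((k : ℤ) + 1) := by
    congr 1 with k
    rw [hsym, zpow_neg, ← inv_zpow]
  -- compute the integral: it equals π * L 0
  have hint : (∫ φ in (0 : ℝ)..Real.pi,
      ∑' j : ℤ, L j * Complex.exp (Complex.I * (j : ℂ) * (φ : ℂ))) = Real.pi * L 0 := by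
    set g : ℤ → ℂ := fun j => ∫ φ in (0 : ℝ)..Real.pi,
      L j * Complex.exp (Complex.I * (j : ℂ) * (φ : ℂ)) with hgdef
    have hcont : ∀ j : ℤ, Continuous fun φ : ℝ =>
        L j * Complex.exp (Complex.I * (j : ℂ) * (φ : ℂ)) := by
      intro j; fun_prop
    set F : ℤ → C(ℝ, ℂ) := fun j => ⟨_, hcont j⟩ with hF
    have hnormF : ∀ j : ℤ,
        ‖(F j).restrict (⟨Set.uIcc (0 : ℝ) Real.pi, isCompact_uIcc⟩ :
          TopologicalSpace.Compacts ℝ)‖ ≤ ‖L j‖ := by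
      intro j
      refine (ContinuousMap.norm_le _ (norm_nonneg _)).mpr ?_
      rintro ⟨x, hx⟩
      simp only [ContinuousMap.restrict_apply, hF, ContinuousMap.coe_mk]
      rw [norm_mul]
      have hxe : Complex.I * (j : ℂ) * (x : ℂ) = ((j * x : ℝ) : ℂ) * Complex.I := by
        push_cast; ring
      rw [hxe, Complex.norm_exp_ofReal_mul_I, mul_one]
    have hswap : (∫ φ in (0 : ℝ)..Real.pi,
        ∑' j : ℤ, L j * Complex.exp (Complex.I * (j : ℂ) * (φ : ℂ))) = ∑' j : ℤ, g j := by
      exact (tsum_intervalIntegral_eq_of_summable_norm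
        (hLnorm.of_nonneg_of_le (fun j => norm_nonneg _) hnormF)).symm
    have hgsummable : Summable g := by
      refine Summable.of_norm_bounded
        (hLnorm.mul_right |Real.pi - 0|) (fun j => ?_)
      refine intervalIntegral.norm_integral_le_of_norm_le_const (fun x hx => ?_)
      rw [norm_mul]
      have hxe : Complex.I * (j : ℂ) * (x : ℂ) = ((j * x : ℝ) : ℂ) * Complex.I := by
        push_cast; ring
      rw [hxe, Complex.norm_exp_ofReal_mul_I, mul_one]
    have gnat : Summable fun n : ℕ => g (n : ℤ) :=
      hgsummable.comp_injective (fun a b hab => by exact_mod_cast hab)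
    have gneg : Summable fun n : ℕ => g (-((n : ℤ) + 1)) :=
      hgsummable.comp_injective (fun a b hab => by omega)
    have hgval : ∀ k : ℤ, k ≠ 0 → g k =
        L k * ((Complex.exp (Complex.I * (k : ℂ) * (Real.pi : ℂ)) - 1) /
          (Complex.I * (k : ℂ))) := by
      intro k hk
      have hc : Complex.I * (k : ℂ) ≠ 0 :=
        mul_ne_zero Complex.I_ne_zero (by exact_mod_cast hk)
      rw [hgdef]
      simp only []
      rw [intervalIntegral.integral_const_mul, integral_exp_mul_complex hc]
      norm_num
    have hodd : ∀ k : ℤ, k ≠ 0 → g (-k) = -g k := by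
      intro k hk
      have hcast : ((-k : ℤ) : ℂ) = -(k : ℂ) := by push_cast; ring
      have h2 : Complex.exp (Complex.I * (k : ℂ) * (Real.pi : ℂ)) *
          Complex.exp (Complex.I * (k : ℂ) * (Real.pi : ℂ)) = 1 := by
        rw [← Complex.exp_add]
        have he : Complex.I * (k : ℂ) * (Real.pi : ℂ) + Complex.I * (k : ℂ) * (Real.pi : ℂ) =
            (k : ℂ) * (2 * (Real.pi : ℂ) * Complex.I) := by ring
        rw [he]
        exact Complex.exp_int_mul_two_pi_mul_I k
      have h1 : Complex.exp (Complex.I * (k : ℂ) * (Real.pi : ℂ)) *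
          Complex.exp (Complex.I * (-(k : ℂ)) * (Real.pi : ℂ)) = 1 := by
        rw [← Complex.exp_add]
        have he : Complex.I * (k : ℂ) * (Real.pi : ℂ) + Complex.I * (-(k : ℂ)) * (Real.pi : ℂ) =
            0 := by ring
        rw [he, Complex.exp_zero]
      have hexp : Complex.exp (Complex.I * (-(k : ℂ)) * (Real.pi : ℂ)) =
          Complex.exp (Complex.I * (k : ℂ) * (Real.pi : ℂ)) :=
        mul_left_cancel₀ (Complex.exp_ne_zero _) (h1.trans h2.symm)
      rw [hgval (-k) (by omega), hgval k hk, hsym, hcast, hexp]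
      rw [mul_neg, div_neg, mul_neg]
    have h0 : g 0 = Real.pi * L 0 := by
      rw [hgdef]
      simp only [Int.cast_zero, mul_zero, zero_mul, Complex.exp_zero, mul_one,
        intervalIntegral.integral_const, sub_zero, Complex.real_smul]
    have hsum1 : (∑' j : ℤ, g j) = (∑' n : ℕ, g (n : ℤ)) + ∑' n : ℕ, g (-((n : ℤ) + 1)) :=
      tsum_of_nat_of_neg_add_one gnat gneg
    have hsum2 : (∑' n : ℕ, g (n : ℤ)) = g 0 + ∑' n : ℕ, g ((n : ℤ) + 1) := by
      rw [Summable.tsum_eq_zero_add gnat]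
      push_cast
      norm_num
    have hsum3 : (∑' n : ℕ, g (-((n : ℤ) + 1))) = -∑' n : ℕ, g ((n : ℤ) + 1) := by
      rw [← tsum_neg]
      congr 1 with n
      exact hodd ((n : ℤ) + 1) (by omega)
    rw [hswap, hsum1, hsum2, hsum3, h0]
    ring
  rw [hkey, hint]
  have hπ : (Real.pi : ℂ) ≠ 0 := by
    simpa using Real.pi_ne_zero
  have h0 : (1 / (Real.pi : ℂ)) * ((Real.pi : ℂ) * L 0) = L 0 := by field_simp
  rw [h0, Complex.exp_add, mul_comm, mul_div_assoc, div_self (Complex.exp_ne_zero _), mul_one]
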